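/- For r ≥ 3, the set X of all vertices on level 0 together with all vertices on level r of the butterfly network BF(r) is a fault-tolerant resolving set of BF(r), and consequently β'(BF(r)) = 2^{r+1}. -/

import Mathlib

open SimpleGraph

variable {V : Type*}

/-- `S` is a resolving set of `G`. -/
def ResSet (G : SimpleGraph V) (S : Set V) : Prop :=
  ∀ x y : V, x ≠ y → ∃ w ∈ S, G.dist x w ≠ G.dist y w

/-- `S` is a fault-tolerant resolving set of `G`. -/
def FTResSet (G : SimpleGraph V) (S : Set V) : Prop :=
  ResSet G S ∧ ∀ x ∈ S, ResSet G (S \ {x})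

/-- Metric dimension. -/
noncomputable def md (G : SimpleGraph V) : ℕ :=
  sInf {n | ∃ S : Set V, S.ncard = n ∧ ResSet G S}

/-- Fault-tolerant metric dimension. -/
noncomputable def ftmd (G : SimpleGraph V) : ℕ :=
  sInf {n | ∃ S : Set V, S.ncard = n ∧ FTResSet G S}

/-- `u` and `v` are twins: distinct and with equal open or equal closed neighborhoods. -/
def IsTwinPair (G : SimpleGraph V) (u v : V) : Prop :=
  u ≠ v ∧ (G.neighborSet u = G.neighborSet v ∨
    G.neighborSet u ∪ {u} = G.neighborSet v ∪ {v})

/-- `u` is a twin vertex. -/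
def IsTwin (G : SimpleGraph V) (u : V) : Prop := ∃ v, IsTwinPair G u v

/-- Adjacency in the butterfly network: levels differ by one, and the binary strings are
equal or differ exactly in bit `max(j,j')` (bits indexed 1..r, so bit `b` is index `b-1`). -/
def BFAdj (r : ℕ) (u v : (Fin r → Bool) × Fin (r + 1)) : Prop :=
  (u.2.val + 1 = v.2.val ∨ v.2.val + 1 = u.2.val) ∧
  (u.1 = v.1 ∨ ∃ k : Fin r, k.val + 1 = max u.2.val v.2.val ∧
      u.1 k ≠ v.1 k ∧ ∀ i : Fin r, i ≠ k → u.1 i = v.1 i)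

/-- The `r`-dimensional butterfly network `BF(r)`. -/
def BF (r : ℕ) : SimpleGraph ((Fin r → Bool) × Fin (r + 1)) where
  Adj u v := BFAdj r u v
  symm := by
    constructor
    rintro u v ⟨h1, h2⟩
    refine ⟨h1.symm, ?_⟩
    rcases h2 with h | ⟨k, hk, hne, hall⟩
    · exact Or.inl h.symm
    · exact Or.inr ⟨k, by omega, hne.symm, fun i hi => (hall i hi).symm⟩
  loopless := by
    constructor
    rintro u ⟨h1 | h1, -⟩ <;> omega


namespace BFAux

variable {r : ℕ}

/-- Top differing bit (1-indexed), 0 if none. -/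
def Tp (w x : Fin r → Bool) : ℕ :=
  (Finset.univ.filter fun k => w k ≠ x k).sup fun k => k.val + 1

/-- Bottom differing bit measured from the top: sup of r - k.val, 0 if none. -/
def Tm (w x : Fin r → Bool) : ℕ :=
  (Finset.univ.filter fun k => w k ≠ x k).sup fun k => r - k.val

lemma Tp_le (w x : Fin r → Bool) : Tp w x ≤ r :=
  Finset.sup_le fun k _ => k.isLt

lemma Tm_le (w x : Fin r → Bool) : Tm w x ≤ r :=
  Finset.sup_le fun k _ => Nat.sub_le _ _

lemma le_Tp {w x : Fin r → Bool} {k : Fin r} (h : w k ≠ x k) : k.val + 1 ≤ Tp w x := by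
  unfold Tp
  exact Finset.le_sup (f := fun k : Fin r => k.val + 1) (by simp [h])

lemma le_Tm {w x : Fin r → Bool} {k : Fin r} (h : w k ≠ x k) : r - k.val ≤ Tm w x := by
  unfold Tm
  exact Finset.le_sup (f := fun k : Fin r => r - k.val) (by simp [h])

lemma Tp_self (w : Fin r → Bool) : Tp w w = 0 := by simp [Tp]

lemma Tm_self (w : Fin r → Bool) : Tm w w = 0 := by simp [Tm]

lemma eq_of_Tp_eq_zero {w x : Fin r → Bool} (h : Tp w x = 0) : w = x := by
  funext k
  by_contra hk
  have := le_Tp hk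
  omega

lemma eq_of_Tm_eq_zero {w x : Fin r → Bool} (h : Tm w x = 0) : w = x := by
  funext k
  by_contra hk
  have := le_Tm hk
  have := k.isLt
  omega

lemma Tp_comm (w x : Fin r → Bool) : Tp w x = Tp x w := by
  unfold Tp
  congr 1
  ext k
  simp [ne_comm]

lemma Tm_comm (w x : Fin r → Bool) : Tm w x = Tm x w := by
  unfold Tm
  congr 1
  ext k
  simp [ne_comm]

lemma Tp_flip {x y : Fin r → Bool} {k : Fin r} (h : ∀ i, i ≠ k → x i = y i)
    (w : Fin r → Bool) : Tp w x ≤ max (Tp w y) (k.val + 1) := by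
  apply Finset.sup_le
  intro j hj
  simp only [Finset.mem_filter, Finset.mem_univ, true_and] at hj
  by_cases hjk : j = k
  · subst hjk; exact le_max_of_le_right le_rfl
  · have : w j ≠ y j := by rw [← h j hjk]; exact hj
    exact le_max_of_le_left (le_Tp this)

lemma Tm_flip {x y : Fin r → Bool} {k : Fin r} (h : ∀ i, i ≠ k → x i = y i)
    (w : Fin r → Bool) : Tm w x ≤ max (Tm w y) (r - k.val) := by
  apply Finset.sup_le
  intro j hj
  simp only [Finset.mem_filter, Finset.mem_univ, true_and] at hj
  by_cases hjk : j = k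
  · subst hjk; exact le_max_of_le_right le_rfl
  · have : w j ≠ y j := by rw [← h j hjk]; exact hj
    exact le_max_of_le_left (le_Tm this)

/-- Potential: distance to (w, 0). -/
def pot0 (w : Fin r → Bool) (v : (Fin r → Bool) × Fin (r + 1)) : ℕ :=
  2 * max v.2.val (Tp w v.1) - v.2.val

/-- Potential: distance to (w, last). -/
def potr (w : Fin r → Bool) (v : (Fin r → Bool) × Fin (r + 1)) : ℕ :=
  2 * max (r - v.2.val) (Tm w v.1) - (r - v.2.val)

lemma lip0 (w : Fin r → Bool) (u v : (Fin r → Bool) × Fin (r + 1))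
    (h : (BF r).Adj u v) : pot0 w u ≤ pot0 w v + 1 := by
  obtain ⟨x, i⟩ := u
  obtain ⟨y, i'⟩ := v
  obtain ⟨h1, h2⟩ := h
  simp only [pot0]
  rcases h2 with h2 | ⟨k, hk, hne, hall⟩
  · simp only at h2
    subst h2
    simp only at h1 ⊢
    omega
  · simp only at h1 hk hne hall ⊢
    have ha : Tp w x ≤ max (Tp w y) (k.val + 1) := Tp_flip hall w
    have hb : Tp w y ≤ max (Tp w x) (k.val + 1) :=
      Tp_flip (fun i hi => (hall i hi).symm) w
    omega

lemma lipr (w : Fin r → Bool) (u v : (Fin r → Bool) × Fin (r + 1))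
    (h : (BF r).Adj u v) : potr w u ≤ potr w v + 1 := by
  obtain ⟨x, i⟩ := u
  obtain ⟨y, i'⟩ := v
  obtain ⟨h1, h2⟩ := h
  simp only [potr]
  rcases h2 with h2 | ⟨k, hk, hne, hall⟩
  · simp only at h2
    subst h2
    simp only at h1 ⊢
    omega
  · simp only at h1 hk hne hall ⊢
    have ha : Tm w x ≤ max (Tm w y) (r - k.val) := Tm_flip hall w
    have hb : Tm w y ≤ max (Tm w x) (r - k.val) :=
      Tm_flip (fun i hi => (hall i hi).symm) w
    have hkr := k.isLt
    have hi := i.isLt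
    have hi' := i'.isLt
    omega

lemma pot_walk {φ : (Fin r → Bool) × Fin (r + 1) → ℕ}
    (hφ : ∀ u v, (BF r).Adj u v → φ u ≤ φ v + 1)
    {u v : (Fin r → Bool) × Fin (r + 1)} (p : (BF r).Walk u v) :
    φ u ≤ φ v + p.length := by
  induction p with
  | nil => simp
  | @cons a b c h q ih =>
    have := hφ a b h
    simp only [Walk.length_cons]
    omega

lemma upper0 (w : Fin r → Bool) :
    ∀ (n : ℕ) (x : Fin r → Bool) (i : Fin (r + 1)),
      2 * max i.val (Tp w x) - i.val ≤ n →
      ∃ p : (BF r).Walk (x, i) (w, (0 : Fin (r + 1))), p.length ≤ n := by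
  intro n
  induction n with
  | zero =>
    intro x i h
    have h1 : i.val ≤ max i.val (Tp w x) := le_max_left _ _
    have h2 : Tp w x ≤ max i.val (Tp w x) := le_max_right _ _
    have hi : i.val = 0 := by omega
    have hT : Tp w x = 0 := by omega
    obtain rfl : w = x := eq_of_Tp_eq_zero hT
    obtain rfl : i = (0 : Fin (r + 1)) := Fin.ext (by simp [hi])
    exact ⟨Walk.nil, by simp⟩
  | succ n ih =>
    intro x i h
    by_cases hle : 2 * max i.val (Tp w x) - i.val ≤ n
    · obtain ⟨p, hp⟩ := ih x i hle
      exact ⟨p, hp.trans (Nat.le_succ n)⟩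
    by_cases hT : Tp w x ≤ i.val
    · -- go down, fixing bit i
      have hi1 : 1 ≤ i.val := by omega
      have hik : i.val - 1 < r := by have := i.isLt; omega
      set k : Fin r := ⟨i.val - 1, hik⟩ with hkdef
      set x' : Fin r → Bool := Function.update x k (w k) with hx'def
      set i' : Fin (r + 1) := ⟨i.val - 1, by omega⟩ with hi'def
      have hadj : (BF r).Adj (x, i) (x', i') := by
        constructor
        · right; show i.val - 1 + 1 = i.val; omega
        · by_cases hxk : x k = w k
          · left
            show x = x'
            rw [hx'def, ← hxk, Function.update_eq_self]
          · right
            refine ⟨k, ?_, ?_, ?_⟩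
            · show i.val - 1 + 1 = max i.val (i.val - 1); omega
            · show x k ≠ x' k
              rw [hx'def, Function.update_self]
              exact hxk
            · intro j hj
              show x j = x' j
              rw [hx'def, Function.update_of_ne hj]
      have hT' : Tp w x' ≤ i.val - 1 := by
        apply Finset.sup_le
        intro j hj
        simp only [Finset.mem_filter, Finset.mem_univ, true_and] at hj
        by_cases hjk : j = k
        · subst hjk
          rw [hx'def, Function.update_self] at hj
          exact absurd rfl hj
        · rw [hx'def, Function.update_of_ne hjk] at hj
          have h3 := le_Tp hj
          have h4 : j.val ≠ i.val - 1 := fun hc => hjk (Fin.ext hc)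
          omega
      obtain ⟨p, hp⟩ := ih x' i' (by show 2 * max (i.val - 1) (Tp w x') - (i.val - 1) ≤ n; omega)
      exact ⟨Walk.cons hadj p, by simp only [Walk.length_cons]; omega⟩
    · -- go up
      push_neg at hT
      have hub : Tp w x ≤ r := Tp_le w x
      set i' : Fin (r + 1) := ⟨i.val + 1, by omega⟩ with hi'def
      have hadj : (BF r).Adj (x, i) (x, i') := ⟨Or.inl rfl, Or.inl rfl⟩
      obtain ⟨p, hp⟩ := ih x i' (by show 2 * max (i.val + 1) (Tp w x) - (i.val + 1) ≤ n; omega)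
      exact ⟨Walk.cons hadj p, by simp only [Walk.length_cons]; omega⟩

lemma upperr (w : Fin r → Bool) :
    ∀ (n : ℕ) (x : Fin r → Bool) (i : Fin (r + 1)),
      2 * max (r - i.val) (Tm w x) - (r - i.val) ≤ n →
      ∃ p : (BF r).Walk (x, i) (w, Fin.last r), p.length ≤ n := by
  intro n
  induction n with
  | zero =>
    intro x i h
    have h1 : r - i.val ≤ max (r - i.val) (Tm w x) := le_max_left _ _
    have h2 : Tm w x ≤ max (r - i.val) (Tm w x) := le_max_right _ _
    have hile : i.val ≤ r := Fin.is_le i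
    have hi : i.val = r := by omega
    have hT : Tm w x = 0 := by omega
    obtain rfl : w = x := eq_of_Tm_eq_zero hT
    obtain rfl : i = Fin.last r := Fin.ext (by simp [hi])
    exact ⟨Walk.nil, by simp⟩
  | succ n ih =>
    intro x i h
    have hile : i.val ≤ r := Fin.is_le i
    by_cases hle : 2 * max (r - i.val) (Tm w x) - (r - i.val) ≤ n
    · obtain ⟨p, hp⟩ := ih x i hle
      exact ⟨p, hp.trans (Nat.le_succ n)⟩
    by_cases hT : Tm w x ≤ r - i.val
    · -- go up, fixing bit i+1
      have hi1 : i.val < r := by omega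
      set k : Fin r := ⟨i.val, hi1⟩ with hkdef
      set x' : Fin r → Bool := Function.update x k (w k) with hx'def
      set i' : Fin (r + 1) := ⟨i.val + 1, by omega⟩ with hi'def
      have hadj : (BF r).Adj (x, i) (x', i') := by
        constructor
        · left; rfl
        · by_cases hxk : x k = w k
          · left
            show x = x'
            rw [hx'def, ← hxk, Function.update_eq_self]
          · right
            refine ⟨k, ?_, ?_, ?_⟩
            · show i.val + 1 = max i.val (i.val + 1); omega
            · show x k ≠ x' k
              rw [hx'def, Function.update_self]
              exact hxk
            · intro j hj
              show x j = x' j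
              rw [hx'def, Function.update_of_ne hj]
      have hT' : Tm w x' ≤ r - i.val - 1 := by
        apply Finset.sup_le
        intro j hj
        simp only [Finset.mem_filter, Finset.mem_univ, true_and] at hj
        by_cases hjk : j = k
        · subst hjk
          rw [hx'def, Function.update_self] at hj
          exact absurd rfl hj
        · rw [hx'def, Function.update_of_ne hjk] at hj
          have h3 := le_Tm hj
          have h4 : j.val ≠ i.val := fun hc => hjk (Fin.ext hc)
          have h5 := j.isLt
          omega
      obtain ⟨p, hp⟩ := ih x' i'
        (by show 2 * max (r - (i.val + 1)) (Tm w x') - (r - (i.val + 1)) ≤ n; omega)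
      exact ⟨Walk.cons hadj p, by simp only [Walk.length_cons]; omega⟩
    · -- go down
      push_neg at hT
      have hub : Tm w x ≤ r := Tm_le w x
      have hi1 : 1 ≤ i.val := by omega
      set i' : Fin (r + 1) := ⟨i.val - 1, by omega⟩ with hi'def
      have hadj : (BF r).Adj (x, i) (x, i') := by
        refine ⟨Or.inr ?_, Or.inl rfl⟩
        show i.val - 1 + 1 = i.val; omega
      obtain ⟨p, hp⟩ := ih x i'
        (by show 2 * max (r - (i.val - 1)) (Tm w x) - (r - (i.val - 1)) ≤ n; omega)
      exact ⟨Walk.cons hadj p, by simp only [Walk.length_cons]; omega⟩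

lemma dist0 (x : Fin r → Bool) (i : Fin (r + 1)) (w : Fin r → Bool) :
    (BF r).dist (x, i) (w, (0 : Fin (r + 1))) = 2 * max i.val (Tp w x) - i.val := by
  obtain ⟨p0, hp0⟩ := upper0 w (2 * max i.val (Tp w x) - i.val) x i le_rfl
  apply le_antisymm
  · exact (SimpleGraph.dist_le p0).trans hp0
  · obtain ⟨p, hp⟩ := (Reachable.exists_walk_length_eq_dist ⟨p0⟩)
    have hw := pot_walk (lip0 w) p
    have h0 : pot0 w (w, (0 : Fin (r + 1))) = 0 := by simp [pot0, Tp_self]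
    rw [h0, hp] at hw
    simpa [pot0] using hw

lemma distr (x : Fin r → Bool) (i : Fin (r + 1)) (w : Fin r → Bool) :
    (BF r).dist (x, i) (w, Fin.last r) = 2 * max (r - i.val) (Tm w x) - (r - i.val) := by
  obtain ⟨p0, hp0⟩ := upperr w (2 * max (r - i.val) (Tm w x) - (r - i.val)) x i le_rfl
  apply le_antisymm
  · exact (SimpleGraph.dist_le p0).trans hp0
  · obtain ⟨p, hp⟩ := (Reachable.exists_walk_length_eq_dist ⟨p0⟩)
    have hw := pot_walk (lipr w) p
    have h0 : potr w (w, Fin.last r) = 0 := by simp [potr, Tm_self]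
    rw [h0, hp] at hw
    simpa [potr] using hw

lemma bf_reachable (u v : (Fin r → Bool) × Fin (r + 1)) : (BF r).Reachable u v := by
  obtain ⟨p1, -⟩ := upper0 v.1 _ u.1 u.2 le_rfl
  obtain ⟨p2, -⟩ := upper0 v.1 _ v.1 v.2 le_rfl
  have h1 : (BF r).Reachable u (v.1, (0 : Fin (r + 1))) := by
    rw [← Prod.mk.eta (p := u)]; exact ⟨p1⟩
  have h2 : (BF r).Reachable v (v.1, (0 : Fin (r + 1))) := by
    rw [← Prod.mk.eta (p := v)]; exact ⟨p2⟩
  exact h1.trans h2.symm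

lemma twin_dist_le {u v w : (Fin r → Bool) × Fin (r + 1)}
    (hN : (BF r).neighborSet u = (BF r).neighborSet v) (hw : w ≠ u) :
    (BF r).dist v w ≤ (BF r).dist u w := by
  obtain ⟨p, hp⟩ := (bf_reachable u w).exists_walk_length_eq_dist
  cases p with
  | nil => exact (hw rfl).elim
  | @cons _ b _ h q =>
    have hb : b ∈ (BF r).neighborSet u := h
    rw [hN] at hb
    have hvb : (BF r).Adj v b := hb
    calc (BF r).dist v w ≤ (Walk.cons hvb q).length := SimpleGraph.dist_le _
      _ = (BF r).dist u w := by
          rw [← hp]; simp [SimpleGraph.Walk.length_cons]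

lemma twin_dist {u v w : (Fin r → Bool) × Fin (r + 1)}
    (hN : (BF r).neighborSet u = (BF r).neighborSet v)
    (hwu : w ≠ u) (hwv : w ≠ v) : (BF r).dist u w = (BF r).dist v w :=
  le_antisymm (twin_dist_le hN.symm hwv) (twin_dist_le hN hwu)

lemma mem_of_twin {S : Set ((Fin r → Bool) × Fin (r + 1))} (hS : FTResSet (BF r) S)
    {v v' : (Fin r → Bool) × Fin (r + 1)} (hvv' : v ≠ v')
    (hN : (BF r).neighborSet v = (BF r).neighborSet v') : v ∈ S := by
  by_cases hv' : v' ∈ S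
  · obtain ⟨w, hwS, hwd⟩ := hS.2 v' hv' v v' hvv'
    have hwv' : w ≠ v' := by simpa using hwS.2
    have hwv : w = v := by
      by_contra hne
      exact hwd (twin_dist hN hne hwv')
    exact hwv ▸ hwS.1
  · obtain ⟨w, hwS, hwd⟩ := hS.1 v v' hvv'
    have hwv' : w ≠ v' := fun hc => hv' (hc ▸ hwS)
    have hwv : w = v := by
      by_contra hne
      exact hwd (twin_dist hN hne hwv')
    exact hwv ▸ hwS

lemma adj_zero_iff (hr0 : 0 < r) (s y : Fin r → Bool) (i : Fin (r + 1)) :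
    (BF r).Adj (s, (0 : Fin (r + 1))) (y, i) ↔
      (i.val = 1 ∧ ∀ j : Fin r, j ≠ ⟨0, hr0⟩ → y j = s j) := by
  constructor
  · rintro ⟨h1, h2⟩
    simp only [Fin.val_zero] at h1
    have hi : i.val = 1 := by omega
    refine ⟨hi, ?_⟩
    rcases h2 with h2 | ⟨k, hk, hne, hall⟩
    · simp only at h2
      subst h2
      intro j _; rfl
    · simp only [Fin.val_zero, hi] at hk
      have hk0 : k = ⟨0, hr0⟩ := Fin.ext (by simp at hk ⊢; omega)
      subst hk0
      intro j hj
      exact (hall j hj).symm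
  · rintro ⟨hi, hall⟩
    refine ⟨Or.inl (by simp [hi]), ?_⟩
    by_cases hy : y ⟨0, hr0⟩ = s ⟨0, hr0⟩
    · left
      funext j
      by_cases hj : j = ⟨0, hr0⟩
      · subst hj; exact hy.symm
      · exact (hall j hj).symm
    · right
      refine ⟨⟨0, hr0⟩, by simp [hi], fun hc => hy hc.symm, fun j hj => (hall j hj).symm⟩

lemma adj_last_iff (hr0 : 0 < r) (s y : Fin r → Bool) (i : Fin (r + 1)) :
    (BF r).Adj (s, Fin.last r) (y, i) ↔
      (i.val + 1 = r ∧ ∀ j : Fin r, j ≠ ⟨r - 1, by omega⟩ → y j = s j) := by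
  constructor
  · rintro ⟨h1, h2⟩
    simp only [Fin.val_last] at h1
    have hile := Fin.is_le i
    have hi : i.val + 1 = r := by omega
    refine ⟨hi, ?_⟩
    rcases h2 with h2 | ⟨k, hk, hne, hall⟩
    · simp only at h2
      subst h2
      intro j _; rfl
    · simp only [Fin.val_last] at hk
      have hkr : k = (⟨r - 1, by omega⟩ : Fin r) := Fin.ext (by simp at hk ⊢; omega)
      intro j hj
      refine (hall j fun hc => hj ?_).symm
      rw [hc, hkr]
  · rintro ⟨hi, hall⟩
    refine ⟨Or.inr (by simp [hi]), ?_⟩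
    by_cases hy : y ⟨r - 1, by omega⟩ = s ⟨r - 1, by omega⟩
    · left
      funext j
      by_cases hj : j = (⟨r - 1, by omega⟩ : Fin r)
      · subst hj; exact hy.symm
      · exact (hall j hj).symm
    · right
      refine ⟨⟨r - 1, by omega⟩, by simp [hi]; omega, fun hc => hy hc.symm,
        fun j hj => (hall j hj).symm⟩

lemma nbhd_zero (hr0 : 0 < r) (s : Fin r → Bool) :
    (BF r).neighborSet (s, (0 : Fin (r + 1))) =
      (BF r).neighborSet (Function.update s ⟨0, hr0⟩ (!(s ⟨0, hr0⟩)), (0 : Fin (r + 1))) := by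
  ext ⟨y, i⟩
  simp only [mem_neighborSet, adj_zero_iff hr0]
  constructor
  · rintro ⟨hi, hall⟩
    refine ⟨hi, fun j hj => ?_⟩
    rw [Function.update_of_ne hj]
    exact hall j hj
  · rintro ⟨hi, hall⟩
    refine ⟨hi, fun j hj => ?_⟩
    rw [hall j hj, Function.update_of_ne hj]

lemma nbhd_last (hr0 : 0 < r) (s : Fin r → Bool) :
    (BF r).neighborSet (s, Fin.last r) =
      (BF r).neighborSet
        (Function.update s ⟨r - 1, by omega⟩ (!(s ⟨r - 1, by omega⟩)), Fin.last r) := by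
  ext ⟨y, i⟩
  simp only [mem_neighborSet, adj_last_iff hr0]
  constructor
  · rintro ⟨hi, hall⟩
    refine ⟨hi, fun j hj => ?_⟩
    rw [Function.update_of_ne hj]
    exact hall j hj
  · rintro ⟨hi, hall⟩
    refine ⟨hi, fun j hj => ?_⟩
    rw [hall j hj, Function.update_of_ne hj]

lemma key_lt (hr : 3 ≤ r) (s t : Fin r → Bool) (j l : Fin (r + 1)) (hlt : j.val < l.val) :
    ∃ w1 w2 : (Fin r → Bool) × Fin (r + 1),
      (w1.2.val = 0 ∨ w1.2.val = r) ∧ (w2.2.val = 0 ∨ w2.2.val = r) ∧ w1 ≠ w2 ∧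
      (BF r).dist (s, j) w1 ≠ (BF r).dist (t, l) w1 ∧
      (BF r).dist (s, j) w2 ≠ (BF r).dist (t, l) w2 := by
  have hr0 : 0 < r := by omega
  by_cases hj : 1 ≤ j.val
  · refine ⟨(s, (0 : Fin (r + 1))),
      (Function.update s ⟨0, hr0⟩ (!(s ⟨0, hr0⟩)), (0 : Fin (r + 1))),
      Or.inl (by simp), Or.inl (by simp), ?_, ?_, ?_⟩
    · intro hc
      have := congrFun (congrArg Prod.fst hc) ⟨0, hr0⟩
      simp [Function.update_self] at this
    · rw [dist0, dist0, Tp_self]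
      have : l.val ≤ max l.val (Tp s t) := le_max_left _ _
      omega
    · rw [dist0, dist0]
      have h1 : Tp (Function.update s ⟨0, hr0⟩ (!(s ⟨0, hr0⟩))) s ≤ 1 := by
        apply Finset.sup_le
        intro k hk
        simp only [Finset.mem_filter, Finset.mem_univ, true_and] at hk
        by_cases hkk : k = (⟨0, hr0⟩ : Fin r)
        · subst hkk; simp
        · rw [Function.update_of_ne hkk] at hk
          exact absurd rfl hk
      have h2 : l.val ≤ max l.val (Tp (Function.update s ⟨0, hr0⟩ (!(s ⟨0, hr0⟩))) t) :=
        le_max_left _ _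
      omega
  · push_neg at hj
    refine ⟨(s, (0 : Fin (r + 1))), (t, Fin.last r),
      Or.inl (by simp), Or.inr (by simp), ?_, ?_, ?_⟩
    · intro hc
      have := congrArg (fun z : (Fin r → Bool) × Fin (r + 1) => z.2.val) hc
      simp at this
      omega
    · rw [dist0, dist0, Tp_self]
      have : l.val ≤ max l.val (Tp s t) := le_max_left _ _
      omega
    · rw [distr, distr, Tm_self]
      have h1 := Tm_le t s
      have h2 := Fin.is_le l
      omega

lemma key_eq (hr : 3 ≤ r) (s t : Fin r → Bool) (j : Fin (r + 1)) (hst : s ≠ t) :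
    ∃ w1 w2 : (Fin r → Bool) × Fin (r + 1),
      (w1.2.val = 0 ∨ w1.2.val = r) ∧ (w2.2.val = 0 ∨ w2.2.val = r) ∧ w1 ≠ w2 ∧
      (BF r).dist (s, j) w1 ≠ (BF r).dist (t, j) w1 ∧
      (BF r).dist (s, j) w2 ≠ (BF r).dist (t, j) w2 := by
  have hT0 : 1 ≤ Tp t s := by
    rcases Nat.eq_zero_or_pos (Tp t s) with h | h
    · exact absurd (eq_of_Tp_eq_zero h).symm hst
    · exact h
  by_cases hTj : j.val < Tp t s
  · refine ⟨(s, (0 : Fin (r + 1))), (t, (0 : Fin (r + 1))),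
      Or.inl (by simp), Or.inl (by simp), ?_, ?_, ?_⟩
    · intro hc; exact hst (congrArg Prod.fst hc)
    · rw [dist0, dist0, Tp_self, Tp_comm s t]; omega
    · rw [dist0, dist0, Tp_self]; omega
  · push_neg at hTj
    obtain ⟨k, hk⟩ : ∃ k, t k ≠ s k := by
      by_contra hc
      push_neg at hc
      exact hst (funext fun k => (hc k).symm)
    have hk1 := le_Tp hk
    have hk2 := le_Tm hk
    have hjr := Fin.is_le j
    have hkr := k.isLt
    refine ⟨(s, Fin.last r), (t, Fin.last r),
      Or.inr (by simp), Or.inr (by simp), ?_, ?_, ?_⟩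
    · intro hc; exact hst (congrArg Prod.fst hc)
    · rw [distr, distr, Tm_self, Tm_comm s t]; omega
    · rw [distr, distr, Tm_self]; omega

lemma key (hr : 3 ≤ r) (u v : (Fin r → Bool) × Fin (r + 1)) (huv : u ≠ v) :
    ∃ w1 w2 : (Fin r → Bool) × Fin (r + 1),
      (w1.2.val = 0 ∨ w1.2.val = r) ∧ (w2.2.val = 0 ∨ w2.2.val = r) ∧ w1 ≠ w2 ∧
      (BF r).dist u w1 ≠ (BF r).dist v w1 ∧
      (BF r).dist u w2 ≠ (BF r).dist v w2 := by
  obtain ⟨s, j⟩ := u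
  obtain ⟨t, l⟩ := v
  rcases Nat.lt_trichotomy j.val l.val with h | h | h
  · exact key_lt hr s t j l h
  · have hjl : j = l := Fin.ext h
    subst hjl
    have hst : s ≠ t := fun hc => huv (by rw [hc])
    exact key_eq hr s t j hst
  · obtain ⟨w1, w2, m1, m2, hne, d1, d2⟩ := key_lt hr t s l j h
    exact ⟨w1, w2, m1, m2, hne, d1.symm, d2.symm⟩

lemma card_X (hr : 3 ≤ r) :
    ({v : (Fin r → Bool) × Fin (r + 1) | v.2.val = 0 ∨ v.2.val = r}).ncard = 2 ^ (r + 1) := by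
  classical
  set A := (fun s : Fin r → Bool => (s, (0 : Fin (r + 1)))) '' Set.univ with hA
  set B := (fun s : Fin r → Bool => (s, Fin.last r)) '' Set.univ with hB
  have hXeq : {v : (Fin r → Bool) × Fin (r + 1) | v.2.val = 0 ∨ v.2.val = r} = A ∪ B := by
    ext ⟨y, i⟩
    simp only [Set.mem_setOf_eq, hA, hB, Set.mem_union, Set.mem_image, Set.mem_univ, true_and]
    constructor
    · rintro (h | h)
      · exact Or.inl ⟨y, by rw [show (0 : Fin (r + 1)) = i from Fin.ext (by simp [h])]⟩
      · exact Or.inr ⟨y, by rw [show Fin.last r = i from Fin.ext (by simp [h])]⟩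
    · rintro (⟨a, ha⟩ | ⟨a, ha⟩)
      · have h2 := congrArg (fun z : (Fin r → Bool) × Fin (r + 1) => z.2.val) ha
        simp at h2
        exact Or.inl h2.symm
      · have h2 := congrArg (fun z : (Fin r → Bool) × Fin (r + 1) => z.2.val) ha
        simp at h2
        exact Or.inr h2.symm
  have hdisj : Disjoint A B := by
    rw [Set.disjoint_left]
    rintro z ⟨a, -, ha⟩ ⟨b, -, hb⟩
    have h1 := congrArg (fun w : (Fin r → Bool) × Fin (r + 1) => w.2.val) ha
    have h2 := congrArg (fun w : (Fin r → Bool) × Fin (r + 1) => w.2.val) hb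
    simp at h1 h2
    omega
  have hinj0 : Function.Injective (fun s : Fin r → Bool => (s, (0 : Fin (r + 1)))) :=
    fun a b h => by simpa using congrArg Prod.fst h
  have hinjr : Function.Injective (fun s : Fin r → Bool => (s, Fin.last r)) :=
    fun a b h => by simpa using congrArg Prod.fst h
  have hcA : A.ncard = 2 ^ r := by
    rw [hA, Set.ncard_image_of_injective _ hinj0, Set.ncard_univ, Nat.card_eq_fintype_card]
    simp [Fintype.card_fun]
  have hcB : B.ncard = 2 ^ r := by
    rw [hB, Set.ncard_image_of_injective _ hinjr, Set.ncard_univ, Nat.card_eq_fintype_card]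
    simp [Fintype.card_fun]
  rw [hXeq, Set.ncard_union_eq hdisj (Set.toFinite A) (Set.toFinite B), hcA, hcB, pow_succ]
  omega

end BFAux


theorem bf_ftmd (r : ℕ) (hr : 3 ≤ r) :
    FTResSet (BF r) {v : (Fin r → Bool) × Fin (r + 1) | v.2.val = 0 ∨ v.2.val = r} ∧
    ftmd (BF r) = 2 ^ (r + 1) := by
  have hr0 : 0 < r := by omega
  have hFT : FTResSet (BF r) {v : (Fin r → Bool) × Fin (r + 1) | v.2.val = 0 ∨ v.2.val = r} := by
    constructor
    · intro x y hxy
      obtain ⟨w1, w2, m1, m2, hne, d1, d2⟩ := BFAux.key hr x y hxy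
      exact ⟨w1, m1, d1⟩
    · intro z hz x y hxy
      obtain ⟨w1, w2, m1, m2, hne, d1, d2⟩ := BFAux.key hr x y hxy
      by_cases hz1 : w1 = z
      · refine ⟨w2, ⟨m2, ?_⟩, d2⟩
        simp only [Set.mem_singleton_iff]
        rintro rfl
        exact hne hz1
      · refine ⟨w1, ⟨m1, ?_⟩, d1⟩
        simpa using hz1
  refine ⟨hFT, ?_⟩
  apply le_antisymm
  · exact Nat.sInf_le ⟨_, BFAux.card_X hr, hFT⟩
  · unfold ftmd
    refine le_csInf ⟨2 ^ (r + 1), ⟨_, BFAux.card_X hr, hFT⟩⟩ ?_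
    rintro n ⟨S, rfl, hS⟩
    have hsub : {v : (Fin r → Bool) × Fin (r + 1) | v.2.val = 0 ∨ v.2.val = r} ⊆ S := by
      rintro ⟨y, i⟩ hyi
      rcases hyi with h0 | hR
      · have hi : i = (0 : Fin (r + 1)) := Fin.ext (by simpa using h0)
        subst hi
        refine BFAux.mem_of_twin hS ?_ (BFAux.nbhd_zero hr0 y)
        intro hc
        have := congrFun (congrArg Prod.fst hc) ⟨0, hr0⟩
        simp [Function.update_self] at this
      · have hi : i = Fin.last r := Fin.ext (by simpa using hR)
        subst hi
        refine BFAux.mem_of_twin hS ?_ (BFAux.nbhd_last hr0 y)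
        intro hc
        have := congrFun (congrArg Prod.fst hc) ⟨r - 1, by omega⟩
        simp [Function.update_self] at this
    calc 2 ^ (r + 1)
        = ({v : (Fin r → Bool) × Fin (r + 1) | v.2.val = 0 ∨ v.2.val = r}).ncard :=
          (BFAux.card_X hr).symm
      _ ≤ S.ncard := Set.ncard_le_ncard hsub (Set.toFinite S)
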